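/- arXiv:0810.1646 — 4 statements merged into one kernel-verified Lean document; each statement's English description precedes it below -/
import Mathlib

section
/- Let n > 1, let g be a positive definite symmetric bilinear form on ℝⁿ with matrix (g_{ij}), and fix a vector y ∈ ℝⁿ with g(y,y) ≠ 0. Set g_{0i} = Σ_k y^k g_{ki}. If real numbers u, v satisfy u·g_{ij} + v·g_{0i}·g_{0j} = 0 for all indices i, j, then u = 0 and v = 0. -/
open Matrix

theorem stmt_0 (n : ℕ) (hn : 1 < n) (g : Matrix (Fin n) (Fin n) ℝ)
    (hg : g.PosDef) (y : Fin n → ℝ) (hy : y ⬝ᵥ g.mulVec y ≠ 0)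
    (u v : ℝ)
    (h : ∀ i j : Fin n, u * g i j + v * ((∑ k, y k * g k i) * (∑ k, y k * g k j)) = 0) :
    u = 0 ∧ v = 0 := by
  set w : Fin n → ℝ := fun i => ∑ k, y k * g k i with hw
  have key : ∀ x z : Fin n → ℝ,
      u * (∑ i, ∑ j, x i * z j * g i j)
        + v * ((∑ i, x i * w i) * (∑ j, z j * w j)) = 0 := by
    intro x z
    have e1 : ∑ i, ∑ j, x i * z j * (u * g i j + v * (w i * w j)) = 0 := by
      exact Finset.sum_eq_zero fun i _ => Finset.sum_eq_zero fun j _ => by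
        have hij : u * g i j + v * (w i * w j) = 0 := h i j
        rw [hij, mul_zero]
    calc u * (∑ i, ∑ j, x i * z j * g i j)
          + v * ((∑ i, x i * w i) * (∑ j, z j * w j))
        = ∑ i, ∑ j, x i * z j * (u * g i j + v * (w i * w j)) := by
          rw [Finset.sum_mul_sum, Finset.mul_sum, Finset.mul_sum,
            ← Finset.sum_add_distrib]
          refine Finset.sum_congr rfl fun i _ => ?_
          rw [Finset.mul_sum, Finset.mul_sum, ← Finset.sum_add_distrib]
          exact Finset.sum_congr rfl fun j _ => by ring
      _ = 0 := e1
  have quadpos : ∀ x : Fin n → ℝ, x ≠ 0 → 0 < ∑ i, ∑ j, x i * x j * g i j := by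
    intro x hx
    refine lt_of_lt_of_eq (hg.dotProduct_mulVec_pos hx) ?_
    simp only [star_trivial, dotProduct, mulVec, Finset.mul_sum]
    exact Finset.sum_congr rfl fun i _ => Finset.sum_congr rfl fun j _ => by ring
  -- construct a nonzero vector orthogonal to w
  let a : Fin n := ⟨0, by omega⟩
  let b : Fin n := ⟨1, hn⟩
  have hab : a ≠ b := Fin.ne_of_val_ne (by simp [a, b])
  obtain ⟨x, hx0, hxw⟩ : ∃ x : Fin n → ℝ, x ≠ 0 ∧ ∑ i, x i * w i = 0 := by
    by_cases hwa : w a = 0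
    · refine ⟨Pi.single a 1, ?_, ?_⟩
      · intro hc
        have := congrFun hc a
        rw [Pi.single_eq_same] at this
        exact one_ne_zero this
      · simp [Pi.single_apply, hwa]
    · refine ⟨fun i => (if i = a then w b else 0) + (if i = b then -w a else 0),
        ?_, ?_⟩
      · intro hc
        have := congrFun hc b
        simp [hab.symm, hwa] at this
      · simp only [add_mul, Finset.sum_add_distrib, ite_mul, zero_mul,
          Finset.sum_ite_eq', Finset.mem_univ, if_true]
        ring
  have hu : u = 0 := by
    have := key x x
    rw [hxw] at this
    have hq := quadpos x hx0
    have : u * (∑ i, ∑ j, x i * x j * g i j) = 0 := by linarith [this]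
    rcases mul_eq_zero.mp this with h' | h'
    · exact h'
    · exact absurd h' (ne_of_gt hq)
  have hq' : (∑ i, y i * w i) = y ⬝ᵥ g.mulVec y := by
    simp only [hw, dotProduct, mulVec, Finset.mul_sum]
    refine Finset.sum_congr rfl fun i _ => Finset.sum_congr rfl fun k _ => ?_
    have hsym : g k i = g i k := by
      have := hg.1
      have := congrFun (congrFun this i) k
      simpa [Matrix.conjTranspose_apply] using this
    rw [hsym]; ring
  have hv : v = 0 := by
    have := key y y
    rw [hu, hq'] at this
    have h2 : v * ((y ⬝ᵥ g.mulVec y) * (y ⬝ᵥ g.mulVec y)) = 0 := by linarith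
    rcases mul_eq_zero.mp h2 with h' | h'
    · exact h'
    · exact absurd h' (mul_ne_zero hy hy)
  exact ⟨hu, hv⟩
end

section
/- Let n ≥ 3 (so that there exist at least three linearly independent directions), let g be a positive definite symmetric bilinear form on ℝⁿ, let y ∈ ℝⁿ be a nonzero vector, and set g_{0i} = Σ_k y^k g_{ki}. If real numbers α₁,…,α₁₀ satisfy, for all indices h, i, j, k, α₁ δ^h_i g_{jk} + α₂ δ^h_j g_{ik} + α₃ δ^h_k g_{ij} + α₄ δ^h_k g_{0i} g_{0j} + α₅ δ^h_j g_{0i} g_{0k} + α₆ δ^h_i g_{0j} g_{0k} + α₇ g_{jk} g_{0i} y^h + α₈ g_{ik} g_{0j} y^h + α₉ g_{ij} g_{0k} y^h + α₁₀ g_{0i} g_{0j} g_{0k} y^h = 0, then α₁ = α₂ = ⋯ = α₁₀ = 0. -/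
open Matrix

namespace Stmt2Aux

variable {n : ℕ}

/-- bilinear form -/
def Sb (g : Matrix (Fin n) (Fin n) ℝ) (v w : Fin n → ℝ) : ℝ := ∑ j, ∑ k, v j * w k * g j k

lemma Sb_eq_dot (g : Matrix (Fin n) (Fin n) ℝ) (v w : Fin n → ℝ) :
    Sb g v w = v ⬝ᵥ g *ᵥ w := by
  unfold Sb
  simp only [dotProduct, mulVec, Finset.mul_sum]
  exact Finset.sum_congr rfl fun j _ => Finset.sum_congr rfl fun k _ => by ring

lemma Sb_pos (g : Matrix (Fin n) (Fin n) ℝ) (hg : g.PosDef) (v : Fin n → ℝ) (hv : v ≠ 0) :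
    0 < Sb g v v := by
  have := hg.dotProduct_mulVec_pos hv
  rwa [Sb_eq_dot, show star v = v from rfl] at *
  
lemma Sb_symm (g : Matrix (Fin n) (Fin n) ℝ) (hg : g.IsHermitian) (v w : Fin n → ℝ) :
    Sb g v w = Sb g w v := by
  unfold Sb
  rw [Finset.sum_comm]
  refine Finset.sum_congr rfl fun j _ => Finset.sum_congr rfl fun k _ => ?_
  have hsym : g k j = g j k := (hg.apply k j).symm.trans (star_trivial _)
  rw [hsym]; ring

lemma exists_ortho (g : Matrix (Fin n) (Fin n) ℝ) (hn : 3 ≤ n) (v w : Fin n → ℝ) :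
    ∃ q : Fin n → ℝ, q ≠ 0 ∧ Sb g v q = 0 ∧ Sb g w q = 0 := by
  let φ : (Fin n → ℝ) →ₗ[ℝ] ℝ × ℝ :=
    { toFun := fun x => (v ⬝ᵥ g *ᵥ x, w ⬝ᵥ g *ᵥ x)
      map_add' := by intro a b; simp [mulVec_add, dotProduct_add]
      map_smul' := by intro c a; simp [mulVec_smul, dotProduct_smul, Prod.smul_mk, smul_eq_mul] }
  have hker : 0 < Module.finrank ℝ (LinearMap.ker φ) := by
    have h1 := φ.finrank_range_add_finrank_ker
    have h2 : Module.finrank ℝ (LinearMap.range φ) ≤ 2 := by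
      have := Submodule.finrank_le (LinearMap.range φ)
      simpa using this
    have h3 : Module.finrank ℝ (Fin n → ℝ) = n := by simp
    omega
  obtain ⟨⟨q, hqmem⟩, hq0⟩ := Module.finrank_pos_iff_exists_ne_zero.mp hker
  refine ⟨q, ?_, ?_, ?_⟩
  · intro hq; apply hq0; ext; simp [hq]
  · rw [Sb_eq_dot]; exact congrArg Prod.fst (LinearMap.mem_ker.mp hqmem)
  · rw [Sb_eq_dot]; exact congrArg Prod.snd (LinearMap.mem_ker.mp hqmem)


lemma pull_i (f : Fin n → ℝ) (F : Fin n → Fin n → ℝ) :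
    (∑ i, f i) * (∑ j, ∑ k, F j k) = ∑ i, ∑ j, ∑ k, f i * F j k := by
  rw [Finset.sum_mul]
  refine Finset.sum_congr rfl fun i _ => ?_
  rw [Finset.mul_sum]
  refine Finset.sum_congr rfl fun j _ => ?_
  rw [Finset.mul_sum]

lemma pull_j (f : Fin n → ℝ) (F : Fin n → Fin n → ℝ) :
    (∑ j, f j) * (∑ i, ∑ k, F i k) = ∑ i, ∑ j, ∑ k, f j * F i k := by
  rw [pull_i f F, Finset.sum_comm]

lemma pull_k (f : Fin n → ℝ) (F : Fin n → Fin n → ℝ) :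
    (∑ k, f k) * (∑ i, ∑ j, F i j) = ∑ i, ∑ j, ∑ k, f k * F i j := by
  rw [pull_i f F, Finset.sum_comm]
  exact Finset.sum_congr rfl fun i _ => Finset.sum_comm

lemma pull3 (f1 f2 f3 : Fin n → ℝ) :
    (∑ i, f1 i) * ((∑ j, f2 j) * (∑ k, f3 k)) = ∑ i, ∑ j, ∑ k, f1 i * (f2 j * f3 k) := by
  rw [Finset.sum_mul_sum]
  exact pull_i f1 _

/-- scalar contraction against g0 -/
def Pb (g0 : Fin n → ℝ) (u : Fin n → ℝ) : ℝ := ∑ i, u i * g0 i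

lemma key (g : Matrix (Fin n) (Fin n) ℝ) (g0 : Fin n → ℝ) (y : Fin n → ℝ)
    (α₁ α₂ α₃ α₄ α₅ α₆ α₇ α₈ α₉ α₁₀ : ℝ)
    (h : ∀ h i j k : Fin n,
        α₁ * (if h = i then (1:ℝ) else 0) * g j k
      + α₂ * (if h = j then (1:ℝ) else 0) * g i k
      + α₃ * (if h = k then (1:ℝ) else 0) * g i j
      + α₄ * (if h = k then (1:ℝ) else 0) * g0 i * g0 j
      + α₅ * (if h = j then (1:ℝ) else 0) * g0 i * g0 k
      + α₆ * (if h = i then (1:ℝ) else 0) * g0 j * g0 k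
      + α₇ * g j k * g0 i * y h
      + α₈ * g i k * g0 j * y h
      + α₉ * g i j * g0 k * y h
      + α₁₀ * g0 i * g0 j * g0 k * y h = 0)
    (u v w : Fin n → ℝ) (a : Fin n) :
      α₁ * u a * Sb g v w + α₂ * v a * Sb g u w + α₃ * w a * Sb g u v
    + α₄ * w a * Pb g0 u * Pb g0 v + α₅ * v a * Pb g0 u * Pb g0 w
    + α₆ * u a * Pb g0 v * Pb g0 w
    + α₇ * Sb g v w * Pb g0 u * y a + α₈ * Sb g u w * Pb g0 v * y a
    + α₉ * Sb g u v * Pb g0 w * y a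
    + α₁₀ * Pb g0 u * Pb g0 v * Pb g0 w * y a = 0 := by
  have h0 : ∑ i, ∑ j, ∑ k, u i * v j * w k *
      ( α₁ * (if a = i then (1:ℝ) else 0) * g j k
      + α₂ * (if a = j then (1:ℝ) else 0) * g i k
      + α₃ * (if a = k then (1:ℝ) else 0) * g i j
      + α₄ * (if a = k then (1:ℝ) else 0) * g0 i * g0 j
      + α₅ * (if a = j then (1:ℝ) else 0) * g0 i * g0 k
      + α₆ * (if a = i then (1:ℝ) else 0) * g0 j * g0 k
      + α₇ * g j k * g0 i * y a
      + α₈ * g i k * g0 j * y a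
      + α₉ * g i j * g0 k * y a
      + α₁₀ * g0 i * g0 j * g0 k * y a) = 0 := by
    simp only [h, mul_zero, Finset.sum_const_zero]
  simp only [mul_add, Finset.sum_add_distrib] at h0
  have T1 : ∑ i, ∑ j, ∑ k, u i * v j * w k * (α₁ * (if a = i then (1:ℝ) else 0) * g j k)
      = α₁ * u a * Sb g v w := by
    rw [Finset.sum_eq_single a (fun b _ hb => by simp [Ne.symm hb])
      (fun ha => absurd (Finset.mem_univ a) ha)]
    unfold Sb
    simp only [eq_self_iff_true, if_true, Finset.mul_sum]
    exact Finset.sum_congr rfl fun j _ => Finset.sum_congr rfl fun k _ => by ring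
  have T2 : ∑ i, ∑ j, ∑ k, u i * v j * w k * (α₂ * (if a = j then (1:ℝ) else 0) * g i k)
      = α₂ * v a * Sb g u w := by
    have step : ∀ i, ∑ j, ∑ k, u i * v j * w k * (α₂ * (if a = j then (1:ℝ) else 0) * g i k)
        = v a * ∑ k, u i * w k * (α₂ * g i k) := by
      intro i
      rw [Finset.sum_eq_single a (fun b _ hb => by simp [Ne.symm hb])
        (fun ha => absurd (Finset.mem_univ a) ha)]
      simp only [eq_self_iff_true, if_true, Finset.mul_sum]
      exact Finset.sum_congr rfl fun k _ => by ring
    simp only [step]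
    unfold Sb
    simp only [Finset.mul_sum]
    exact Finset.sum_congr rfl fun j _ => Finset.sum_congr rfl fun k _ => by ring
  have T3 : ∑ i, ∑ j, ∑ k, u i * v j * w k * (α₃ * (if a = k then (1:ℝ) else 0) * g i j)
      = α₃ * w a * Sb g u v := by
    have step : ∀ i j, ∑ k, u i * v j * w k * (α₃ * (if a = k then (1:ℝ) else 0) * g i j)
        = w a * (u i * v j * (α₃ * g i j)) := by
      intro i j
      rw [Finset.sum_eq_single a (fun b _ hb => by simp [Ne.symm hb])
        (fun ha => absurd (Finset.mem_univ a) ha)]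
      simp only [eq_self_iff_true, if_true]; ring
    simp only [step]
    unfold Sb
    simp only [Finset.mul_sum]
    exact Finset.sum_congr rfl fun j _ => Finset.sum_congr rfl fun k _ => by ring
  have T4 : ∑ i, ∑ j, ∑ k, u i * v j * w k * (α₄ * (if a = k then (1:ℝ) else 0) * g0 i * g0 j)
      = α₄ * w a * Pb g0 u * Pb g0 v := by
    have step : ∀ i j, ∑ k, u i * v j * w k * (α₄ * (if a = k then (1:ℝ) else 0) * g0 i * g0 j)
        = w a * (u i * g0 i * (v j * g0 j) * α₄) := by
      intro i j
      rw [Finset.sum_eq_single a (fun b _ hb => by simp [Ne.symm hb])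
        (fun ha => absurd (Finset.mem_univ a) ha)]
      simp only [eq_self_iff_true, if_true]; ring
    simp only [step]
    unfold Pb
    simp only [Finset.mul_sum, Finset.sum_mul]
    rw [Finset.sum_comm]
    exact Finset.sum_congr rfl fun j _ => Finset.sum_congr rfl fun k _ => by ring
  have T5 : ∑ i, ∑ j, ∑ k, u i * v j * w k * (α₅ * (if a = j then (1:ℝ) else 0) * g0 i * g0 k)
      = α₅ * v a * Pb g0 u * Pb g0 w := by
    have step : ∀ i, ∑ j, ∑ k, u i * v j * w k * (α₅ * (if a = j then (1:ℝ) else 0) * g0 i * g0 k)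
        = v a * ∑ k, u i * g0 i * (w k * g0 k) * α₅ := by
      intro i
      rw [Finset.sum_eq_single a (fun b _ hb => by simp [Ne.symm hb])
        (fun ha => absurd (Finset.mem_univ a) ha)]
      simp only [eq_self_iff_true, if_true, Finset.mul_sum]
      exact Finset.sum_congr rfl fun k _ => by ring
    simp only [step]
    have e1 : ∑ i, v a * ∑ k, u i * g0 i * (w k * g0 k) * α₅
        = ∑ i, ∑ k, (u i * g0 i) * ((w k * g0 k) * (α₅ * v a)) := by
      refine Finset.sum_congr rfl fun i _ => ?_
      rw [Finset.mul_sum]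
      exact Finset.sum_congr rfl fun k _ => by ring
    rw [e1, ← Finset.sum_mul_sum, ← Finset.sum_mul]
    unfold Pb
    ring
  have T6 : ∑ i, ∑ j, ∑ k, u i * v j * w k * (α₆ * (if a = i then (1:ℝ) else 0) * g0 j * g0 k)
      = α₆ * u a * Pb g0 v * Pb g0 w := by
    rw [Finset.sum_eq_single a (fun b _ hb => by simp [Ne.symm hb])
      (fun ha => absurd (Finset.mem_univ a) ha)]
    have e1 : ∑ j, ∑ k, u a * v j * w k * (α₆ * (if a = a then (1:ℝ) else 0) * g0 j * g0 k)
        = ∑ j, ∑ k, (v j * g0 j) * ((w k * g0 k) * (α₆ * u a)) := by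
      refine Finset.sum_congr rfl fun j _ => Finset.sum_congr rfl fun k _ => ?_
      simp only [eq_self_iff_true, if_true]; ring
    rw [e1, ← Finset.sum_mul_sum, ← Finset.sum_mul]
    unfold Pb
    ring
  have T7 : ∑ i, ∑ j, ∑ k, u i * v j * w k * (α₇ * g j k * g0 i * y a)
      = α₇ * Sb g v w * Pb g0 u * y a := by
    have e1 : ∑ i, ∑ j, ∑ k, u i * v j * w k * (α₇ * g j k * g0 i * y a)
        = ∑ i, ∑ j, ∑ k, (u i * g0 i * (α₇ * y a)) * (v j * w k * g j k) := by
      exact Finset.sum_congr rfl fun i _ => Finset.sum_congr rfl fun j _ =>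
        Finset.sum_congr rfl fun k _ => by ring
    rw [e1, ← pull_i, ← Finset.sum_mul]
    unfold Sb Pb
    ring
  have T8 : ∑ i, ∑ j, ∑ k, u i * v j * w k * (α₈ * g i k * g0 j * y a)
      = α₈ * Sb g u w * Pb g0 v * y a := by
    have e1 : ∑ i, ∑ j, ∑ k, u i * v j * w k * (α₈ * g i k * g0 j * y a)
        = ∑ i, ∑ j, ∑ k, (v j * g0 j * (α₈ * y a)) * (u i * w k * g i k) := by
      exact Finset.sum_congr rfl fun i _ => Finset.sum_congr rfl fun j _ =>
        Finset.sum_congr rfl fun k _ => by ring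
    rw [e1, ← pull_j, ← Finset.sum_mul]
    unfold Sb Pb
    ring
  have T9 : ∑ i, ∑ j, ∑ k, u i * v j * w k * (α₉ * g i j * g0 k * y a)
      = α₉ * Sb g u v * Pb g0 w * y a := by
    have e1 : ∑ i, ∑ j, ∑ k, u i * v j * w k * (α₉ * g i j * g0 k * y a)
        = ∑ i, ∑ j, ∑ k, (w k * g0 k * (α₉ * y a)) * (u i * v j * g i j) := by
      exact Finset.sum_congr rfl fun i _ => Finset.sum_congr rfl fun j _ =>
        Finset.sum_congr rfl fun k _ => by ring
    rw [e1, ← pull_k, ← Finset.sum_mul]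
    unfold Sb Pb
    ring
  have T10 : ∑ i, ∑ j, ∑ k, u i * v j * w k * (α₁₀ * g0 i * g0 j * g0 k * y a)
      = α₁₀ * Pb g0 u * Pb g0 v * Pb g0 w * y a := by
    have e1 : ∑ i, ∑ j, ∑ k, u i * v j * w k * (α₁₀ * g0 i * g0 j * g0 k * y a)
        = ∑ i, ∑ j, ∑ k, (u i * g0 i) * ((v j * g0 j) * (w k * g0 k * (α₁₀ * y a))) := by
      exact Finset.sum_congr rfl fun i _ => Finset.sum_congr rfl fun j _ =>
        Finset.sum_congr rfl fun k _ => by ring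
    rw [e1, ← pull3, ← Finset.sum_mul]
    unfold Pb
    ring
  rw [T1, T2, T3, T4, T5, T6, T7, T8, T9, T10] at h0
  linarith [h0]

end Stmt2Aux

open Stmt2Aux

theorem stmt_2 (n : ℕ) (hn : 3 ≤ n) (g : Matrix (Fin n) (Fin n) ℝ)
    (hg : g.PosDef) (y : Fin n → ℝ) (hy : y ≠ 0)
    (α₁ α₂ α₃ α₄ α₅ α₆ α₇ α₈ α₉ α₁₀ : ℝ)
    (g0 : Fin n → ℝ) (hg0 : ∀ i, g0 i = ∑ k, y k * g k i)
    (h : ∀ h i j k : Fin n,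
        α₁ * (if h = i then (1:ℝ) else 0) * g j k
      + α₂ * (if h = j then (1:ℝ) else 0) * g i k
      + α₃ * (if h = k then (1:ℝ) else 0) * g i j
      + α₄ * (if h = k then (1:ℝ) else 0) * g0 i * g0 j
      + α₅ * (if h = j then (1:ℝ) else 0) * g0 i * g0 k
      + α₆ * (if h = i then (1:ℝ) else 0) * g0 j * g0 k
      + α₇ * g j k * g0 i * y h
      + α₈ * g i k * g0 j * y h
      + α₉ * g i j * g0 k * y h
      + α₁₀ * g0 i * g0 j * g0 k * y h = 0) :
    α₁ = 0 ∧ α₂ = 0 ∧ α₃ = 0 ∧ α₄ = 0 ∧ α₅ = 0 ∧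
    α₆ = 0 ∧ α₇ = 0 ∧ α₈ = 0 ∧ α₉ = 0 ∧ α₁₀ = 0 := by
  have hsym := hg.1
  have hPS : ∀ u : Fin n → ℝ, Pb g0 u = Sb g y u := by
    intro u
    unfold Pb Sb
    simp only [hg0, Finset.mul_sum]
    rw [Finset.sum_comm]
    exact Finset.sum_congr rfl fun j _ => Finset.sum_congr rfl fun k _ => by ring
  obtain ⟨p, hp0, hyp1, -⟩ := exists_ortho g hn y y
  obtain ⟨q, hq0, hyq, hpq⟩ := exists_ortho g hn y p
  have hQ : 0 < Sb g y y := Sb_pos g hg y hy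
  have hSpp : 0 < Sb g p p := Sb_pos g hg p hp0
  have hQne : Sb g y y ≠ 0 := ne_of_gt hQ
  have hSppne : Sb g p p ≠ 0 := ne_of_gt hSpp
  have hSpy : Sb g p y = 0 := (Sb_symm g hsym p y).trans hyp1
  have hSqp : Sb g q p = 0 := (Sb_symm g hsym q p).trans hpq
  have hSqy : Sb g q y = 0 := (Sb_symm g hsym q y).trans hyq
  have hPp : Pb g0 p = 0 := (hPS p).trans hyp1
  have hPq : Pb g0 q = 0 := (hPS q).trans hyq
  have hPy : Pb g0 y = Sb g y y := hPS y
  have ext : ∀ (c : ℝ) (x : Fin n → ℝ), x ≠ 0 → (∀ a, c * x a = 0) → c = 0 := by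
    intro c x hx hcx
    obtain ⟨a, ha⟩ := Function.ne_iff.mp hx
    have h2 : x a ≠ 0 := by simpa using ha
    exact (mul_eq_zero.mp (hcx a)).resolve_right h2
  have cancel : ∀ c d : ℝ, d ≠ 0 → c * d = 0 → c = 0 :=
    fun c d hd hcd => (mul_eq_zero.mp hcd).resolve_right hd
  have e1 : α₁ = 0 := by
    refine cancel _ _ hSppne (ext (α₁ * Sb g p p) q hq0 fun a => ?_)
    have hk := key g g0 y α₁ α₂ α₃ α₄ α₅ α₆ α₇ α₈ α₉ α₁₀ h q p p a
    simp only [hyp1, hyq, hpq, hSpy, hSqp, hSqy, hPp, hPq, hPy,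
      mul_zero, zero_mul, add_zero, zero_add] at hk
    linear_combination hk
  have e2 : α₂ = 0 := by
    refine cancel _ _ hSppne (ext (α₂ * Sb g p p) q hq0 fun a => ?_)
    have hk := key g g0 y α₁ α₂ α₃ α₄ α₅ α₆ α₇ α₈ α₉ α₁₀ h p q p a
    simp only [hyp1, hyq, hpq, hSpy, hSqp, hSqy, hPp, hPq, hPy,
      mul_zero, zero_mul, add_zero, zero_add] at hk
    linear_combination hk
  have e3 : α₃ = 0 := by
    refine cancel _ _ hSppne (ext (α₃ * Sb g p p) q hq0 fun a => ?_)
    have hk := key g g0 y α₁ α₂ α₃ α₄ α₅ α₆ α₇ α₈ α₉ α₁₀ h p p q a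
    simp only [hyp1, hyq, hpq, hSpy, hSqp, hSqy, hPp, hPq, hPy,
      mul_zero, zero_mul, add_zero, zero_add] at hk
    linear_combination hk
  have e4 : α₄ = 0 := by
    refine cancel _ _ hQne (cancel _ _ hQne (ext (α₄ * Sb g y y * Sb g y y) p hp0 fun a => ?_))
    have hk := key g g0 y α₁ α₂ α₃ α₄ α₅ α₆ α₇ α₈ α₉ α₁₀ h y y p a
    simp only [e1, e2, e3, hyp1, hyq, hpq, hSpy, hSqp, hSqy, hPp, hPq, hPy,
      mul_zero, zero_mul, add_zero, zero_add] at hk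
    linear_combination hk
  have e5 : α₅ = 0 := by
    refine cancel _ _ hQne (cancel _ _ hQne (ext (α₅ * Sb g y y * Sb g y y) p hp0 fun a => ?_))
    have hk := key g g0 y α₁ α₂ α₃ α₄ α₅ α₆ α₇ α₈ α₉ α₁₀ h y p y a
    simp only [e1, e2, e3, e4, hyp1, hyq, hpq, hSpy, hSqp, hSqy, hPp, hPq, hPy,
      mul_zero, zero_mul, add_zero, zero_add] at hk
    linear_combination hk
  have e6 : α₆ = 0 := by
    refine cancel _ _ hQne (cancel _ _ hQne (ext (α₆ * Sb g y y * Sb g y y) p hp0 fun a => ?_))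
    have hk := key g g0 y α₁ α₂ α₃ α₄ α₅ α₆ α₇ α₈ α₉ α₁₀ h p y y a
    simp only [e1, e2, e3, e4, e5, hyp1, hyq, hpq, hSpy, hSqp, hSqy, hPp, hPq, hPy,
      mul_zero, zero_mul, add_zero, zero_add] at hk
    linear_combination hk
  have e7 : α₇ = 0 := by
    refine cancel _ _ hSppne (cancel _ _ hQne (ext (α₇ * Sb g p p * Sb g y y) y hy fun a => ?_))
    have hk := key g g0 y α₁ α₂ α₃ α₄ α₅ α₆ α₇ α₈ α₉ α₁₀ h y p p a
    simp only [e1, e2, e3, e4, e5, e6, hyp1, hyq, hpq, hSpy, hSqp, hSqy, hPp, hPq, hPy,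
      mul_zero, zero_mul, add_zero, zero_add] at hk
    linear_combination hk
  have e8 : α₈ = 0 := by
    refine cancel _ _ hSppne (cancel _ _ hQne (ext (α₈ * Sb g p p * Sb g y y) y hy fun a => ?_))
    have hk := key g g0 y α₁ α₂ α₃ α₄ α₅ α₆ α₇ α₈ α₉ α₁₀ h p y p a
    simp only [e1, e2, e3, e4, e5, e6, e7, hyp1, hyq, hpq, hSpy, hSqp, hSqy, hPp, hPq, hPy,
      mul_zero, zero_mul, add_zero, zero_add] at hk
    linear_combination hk
  have e9 : α₉ = 0 := by
    refine cancel _ _ hSppne (cancel _ _ hQne (ext (α₉ * Sb g p p * Sb g y y) y hy fun a => ?_))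
    have hk := key g g0 y α₁ α₂ α₃ α₄ α₅ α₆ α₇ α₈ α₉ α₁₀ h p p y a
    simp only [e1, e2, e3, e4, e5, e6, e7, e8, hyp1, hyq, hpq, hSpy, hSqp, hSqy, hPp, hPq, hPy,
      mul_zero, zero_mul, add_zero, zero_add] at hk
    linear_combination hk
  have e10 : α₁₀ = 0 := by
    refine cancel _ _ hQne (cancel _ _ hQne (cancel _ _ hQne
      (ext (α₁₀ * Sb g y y * Sb g y y * Sb g y y) y hy fun a => ?_)))
    have hk := key g g0 y α₁ α₂ α₃ α₄ α₅ α₆ α₇ α₈ α₉ α₁₀ h y y y a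
    simp only [e1, e2, e3, e4, e5, e6, e7, e8, e9, hyp1, hyq, hpq, hSpy, hSqp, hSqy,
      hPp, hPq, hPy, mul_zero, zero_mul, add_zero, zero_add] at hk
    linear_combination hk
  exact ⟨e1, e2, e3, e4, e5, e6, e7, e8, e9, e10⟩
end

section
/- Let g be a positive definite symmetric n×n real matrix, y ∈ ℝⁿ, t := (1/2)⟨y, g y⟩, and g₀ := g y (so (g₀)_i = Σ_k g_{ik} y^k). Let c₁, c₂, c₃, d₁, d₂, d₃ be real numbers such that c₁c₂ − c₃² ≠ 0 and (c₁+2td₁)(c₂+2td₂) − (c₃+2td₃)² ≠ 0 and c₂ + 2td₂ ≠ 0. Define the 2n×2n block matrix M with blocks G⁽¹⁾ = c₁g + d₁g₀g₀ᵀ, G⁽²⁾ = c₂g + d₂g₀g₀ᵀ, G⁽³⁾ = c₃g + d₃g₀g₀ᵀ arranged as [[G⁽¹⁾, G⁽³⁾],[G⁽³⁾, G⁽²⁾]]. Then M is invertible and its inverse has the block form [[H₍₁₎, H₍₃₎],[H₍₃₎, H₍₂₎]] with H₍α₎ = p_α g⁻¹ + q_α y yᵀ for some real numbers p_α, q_α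 (α = 1,2,3); moreover p₁ = c₂/(c₁c₂−c₃²), p₂ = c₁/(c₁c₂−c₃²), p₃ = −c₃/(c₁c₂−c₃²). -/
open Matrix

private lemma vmv_sandwich {n : ℕ} (g : Matrix (Fin n) (Fin n) ℝ)
    (hsym : ∀ a b, g a b = g b a) (y : Fin n → ℝ) :
    vecMulVec (g.mulVec y) (g.mulVec y) = g * vecMulVec y y * g := by
  ext i j
  simp only [vecMulVec_apply, mul_apply, mulVec, dotProduct, Finset.sum_mul, Finset.mul_sum]
  refine Finset.sum_congr rfl fun x _ => Finset.sum_congr rfl fun k _ => ?_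
  rw [hsym j x]; ring

private lemma vmv_mid {n : ℕ} (g : Matrix (Fin n) (Fin n) ℝ) (y : Fin n → ℝ) :
    vecMulVec y y * g * vecMulVec y y = (y ⬝ᵥ g.mulVec y) • vecMulVec y y := by
  ext i j
  simp only [vecMulVec_apply, mul_apply, mulVec, dotProduct, Matrix.smul_apply, smul_eq_mul,
    Finset.sum_mul, Finset.mul_sum]
  rw [Finset.sum_comm]
  refine Finset.sum_congr rfl fun x _ => Finset.sum_congr rfl fun k _ => ?_
  ring

set_option maxHeartbeats 1000000 in
private lemma scal_all (c₁ c₂ c₃ d₁ d₂ d₃ t Δ Δ' : ℝ)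
    (h1 : Δ ≠ 0) (h2 : Δ' ≠ 0)
    (hΔ : Δ = c₁ * c₂ - c₃ ^ 2)
    (hΔ' : Δ' = (c₁ + 2*t*d₁) * (c₂ + 2*t*d₂) - (c₃ + 2*t*d₃) ^ 2) :
    ∀ p₁ p₂ p₃ A B C q₁ q₂ q₃ : ℝ,
    p₁ = c₂ / Δ → p₂ = c₁ / Δ → p₃ = -c₃ / Δ →
    A = c₁ + 2*t*d₁ → B = c₂ + 2*t*d₂ → C = c₃ + 2*t*d₃ →
    q₁ = (-(d₁*c₂-d₃*c₃)*B + (d₃*c₂-d₂*c₃)*C)/(Δ*Δ') →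
    q₃ = (-(d₃*c₂-d₂*c₃)*A + (d₁*c₂-d₃*c₃)*C)/(Δ*Δ') →
    q₂ = (-(d₂*c₁-d₃*c₃)*A + (d₃*c₁-d₁*c₃)*C)/(Δ*Δ') →
    (c₁ * p₁ + c₃ * p₃ = 1 ∧ c₁ * p₃ + c₃ * p₂ = 0 ∧ c₃ * p₁ + c₂ * p₃ = 0 ∧ c₃ * p₃ + c₂ * p₂ = 1)
    ∧ (c₁ * q₁ + d₁ * p₁ + 2*t * (d₁ * q₁)) + (c₃ * q₃ + d₃ * p₃ + 2*t * (d₃ * q₃)) = 0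
    ∧ (c₁ * q₃ + d₁ * p₃ + 2*t * (d₁ * q₃)) + (c₃ * q₂ + d₃ * p₂ + 2*t * (d₃ * q₂)) = 0
    ∧ (c₃ * q₁ + d₃ * p₁ + 2*t * (d₃ * q₁)) + (c₂ * q₃ + d₂ * p₃ + 2*t * (d₂ * q₃)) = 0
    ∧ (c₃ * q₃ + d₃ * p₃ + 2*t * (d₃ * q₃)) + (c₂ * q₂ + d₂ * p₂ + 2*t * (d₂ * q₂)) = 0 := by
  rintro p₁ p₂ p₃ A B C q₁ q₂ q₃ rfl rfl rfl rfl rfl rfl rfl rfl rfl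
  refine ⟨⟨?_, ?_, ?_, ?_⟩, ?_, ?_, ?_, ?_⟩ <;> field_simp <;>
    (try rw [hΔ]) <;> (try rw [hΔ']) <;> ring

theorem stmt_4 (n : ℕ) (g : Matrix (Fin n) (Fin n) ℝ) (hg : g.PosDef)
    (y : Fin n → ℝ) (t : ℝ) (ht : t = (1/2) * (y ⬝ᵥ g.mulVec y))
    (c₁ c₂ c₃ d₁ d₂ d₃ : ℝ)
    (h1 : c₁ * c₂ - c₃ ^ 2 ≠ 0)
    (h2 : (c₁ + 2*t*d₁) * (c₂ + 2*t*d₂) - (c₃ + 2*t*d₃) ^ 2 ≠ 0)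
    (h3 : c₂ + 2*t*d₂ ≠ 0)
    (g₀ : Fin n → ℝ) (hg₀ : g₀ = g.mulVec y)
    (M : Matrix (Fin n ⊕ Fin n) (Fin n ⊕ Fin n) ℝ)
    (hM : M = fromBlocks (c₁ • g + d₁ • vecMulVec g₀ g₀) (c₃ • g + d₃ • vecMulVec g₀ g₀)
                         (c₃ • g + d₃ • vecMulVec g₀ g₀) (c₂ • g + d₂ • vecMulVec g₀ g₀)) :
    IsUnit M ∧
    ∃ q₁ q₂ q₃ : ℝ,
      M⁻¹ = fromBlocks
        ((c₂ / (c₁ * c₂ - c₃ ^ 2)) • g⁻¹ + q₁ • vecMulVec y y)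
        ((-(c₃) / (c₁ * c₂ - c₃ ^ 2)) • g⁻¹ + q₃ • vecMulVec y y)
        ((-(c₃) / (c₁ * c₂ - c₃ ^ 2)) • g⁻¹ + q₃ • vecMulVec y y)
        ((c₁ / (c₁ * c₂ - c₃ ^ 2)) • g⁻¹ + q₂ • vecMulVec y y) := by
  have hsym : ∀ a b, g a b = g b a := by
    intro a b
    have h := hg.1
    rw [Matrix.IsHermitian] at h
    conv_rhs => rw [← h]
    simp [conjTranspose_apply]
  have hdet : IsUnit g.det := isUnit_iff_ne_zero.mpr hg.det_pos.ne'
  have hginv : g * g⁻¹ = 1 := Matrix.mul_nonsing_inv g hdet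
  set W : Matrix (Fin n) (Fin n) ℝ := vecMulVec y y with hW
  set s : ℝ := y ⬝ᵥ g.mulVec y with hsdef
  have hs : s = 2 * t := by rw [ht]; ring
  have hGG : vecMulVec g₀ g₀ = g * W * g := by rw [hg₀]; exact vmv_sandwich g hsym y
  have hWgW : W * g * W = s • W := vmv_mid g y
  -- key block multiplication formula
  have key : ∀ c d p q : ℝ,
      (c • g + d • vecMulVec g₀ g₀) * (p • g⁻¹ + q • W) =
        (c * p) • (1 : Matrix (Fin n) (Fin n) ℝ) + (c * q + d * p + s * (d * q)) • (g * W) := by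
    intro c d p q
    rw [hGG]
    have e1 : g * W * g * g⁻¹ = g * W := by
      rw [Matrix.mul_assoc (g * W) g g⁻¹, hginv, Matrix.mul_one]
    have e2 : g * W * g * W = s • (g * W) := by
      rw [Matrix.mul_assoc g W g, Matrix.mul_assoc g (W * g) W, hWgW, Matrix.mul_smul]
    rw [Matrix.add_mul, Matrix.mul_add, Matrix.mul_add, Matrix.smul_mul, Matrix.smul_mul,
      Matrix.smul_mul, Matrix.smul_mul, Matrix.mul_smul, Matrix.mul_smul, Matrix.mul_smul,
      Matrix.mul_smul, hginv, e1, e2]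
    rw [smul_smul, smul_smul]
    module
  -- the scalars
  set Δ : ℝ := c₁ * c₂ - c₃ ^ 2 with hΔ
  set A : ℝ := c₁ + 2*t*d₁ with hA
  set B : ℝ := c₂ + 2*t*d₂ with hB
  set C : ℝ := c₃ + 2*t*d₃ with hC
  set Δ' : ℝ := A * B - C ^ 2 with hΔ'
  set p₁ : ℝ := c₂ / Δ with hp₁
  set p₂ : ℝ := c₁ / Δ with hp₂
  set p₃ : ℝ := -c₃ / Δ with hp₃
  set q₁ : ℝ := (-(d₁*c₂-d₃*c₃)*B + (d₃*c₂-d₂*c₃)*C)/(Δ*Δ') with hq₁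
  set q₃ : ℝ := (-(d₃*c₂-d₂*c₃)*A + (d₁*c₂-d₃*c₃)*C)/(Δ*Δ') with hq₃
  set q₂ : ℝ := (-(d₂*c₁-d₃*c₃)*A + (d₃*c₁-d₁*c₃)*C)/(Δ*Δ') with hq₂
  obtain ⟨⟨e1, e2, e3, e4⟩, E11, E12, E21, E22⟩ :=
    scal_all c₁ c₂ c₃ d₁ d₂ d₃ t Δ Δ' h1 h2
      hΔ (by rw [hΔ', hA, hB, hC]) p₁ p₂ p₃ A B C q₁ q₂ q₃
      hp₁ hp₂ hp₃ hA hB hC hq₁ hq₃ hq₂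
  set N : Matrix (Fin n ⊕ Fin n) (Fin n ⊕ Fin n) ℝ :=
    fromBlocks (p₁ • g⁻¹ + q₁ • W) (p₃ • g⁻¹ + q₃ • W) (p₃ • g⁻¹ + q₃ • W) (p₂ • g⁻¹ + q₂ • W)
    with hN
  have block : ∀ c d c' d' p q p' q' : ℝ,
      c * p + c' * p' = 1 →
      (c * q + d * p + s * (d * q)) + (c' * q' + d' * p' + s * (d' * q')) = 0 →
      (c • g + d • vecMulVec g₀ g₀) * (p • g⁻¹ + q • W) +
        (c' • g + d' • vecMulVec g₀ g₀) * (p' • g⁻¹ + q' • W) = 1 := by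
    intro c d c' d' p q p' q' hone hzero
    rw [key, key, add_add_add_comm, ← add_smul, ← add_smul, hone, hzero, one_smul, zero_smul,
      add_zero]
  have blockz : ∀ c d c' d' p q p' q' : ℝ,
      c * p + c' * p' = 0 →
      (c * q + d * p + s * (d * q)) + (c' * q' + d' * p' + s * (d' * q')) = 0 →
      (c • g + d • vecMulVec g₀ g₀) * (p • g⁻¹ + q • W) +
        (c' • g + d' • vecMulVec g₀ g₀) * (p' • g⁻¹ + q' • W) = 0 := by
    intro c d c' d' p q p' q' hone hzero
    rw [key, key, add_add_add_comm, ← add_smul, ← add_smul, hone, hzero, zero_smul, zero_smul,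
      add_zero]
  have hMN : M * N = 1 := by
    rw [hM, hN, fromBlocks_multiply, ← fromBlocks_one, fromBlocks_inj]
    exact ⟨block c₁ d₁ c₃ d₃ p₁ q₁ p₃ q₃ e1 (by rw [hs]; exact E11),
      blockz c₁ d₁ c₃ d₃ p₃ q₃ p₂ q₂ e2 (by rw [hs]; exact E12),
      blockz c₃ d₃ c₂ d₂ p₁ q₁ p₃ q₃ e3 (by rw [hs]; exact E21),
      block c₃ d₃ c₂ d₂ p₃ q₃ p₂ q₂ e4 (by rw [hs]; exact E22)⟩
  have hNM : N * M = 1 := mul_eq_one_comm.mp hMN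
  refine ⟨⟨⟨M, N, hMN, hNM⟩, rfl⟩, q₁, q₂, q₃, ?_⟩
  rw [Matrix.inv_eq_right_inv hMN, hN, hp₁, hp₂, hp₃, hΔ]
end

section
/- Let g be a positive definite symmetric n×n real matrix, y ∈ ℝⁿ nonzero, g₀ := gy, and c₃, d₃ real numbers with c₃ ≠ 0 and c₃ + 2td₃ ≠ 0, where t := (1/2)⟨y, gy⟩. Then the 2n×2n antidiagonal block matrix [[0, c₃g + d₃g₀g₀ᵀ],[c₃g + d₃g₀g₀ᵀ, 0]] is invertible and symmetric, with signature (n, n) (i.e., n positive and n negative eigenvalues). -/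
open Matrix Polynomial

section Aux

variable {m : Type*} [Fintype m] [DecidableEq m]

lemma aux_charmatrix_diagonal (d : m → ℝ) :
    charmatrix (diagonal d) = diagonal fun i => (X : ℝ[X]) - C (d i) := by
  ext i j
  by_cases h : i = j
  · subst h; simp
  · simp [charmatrix_apply_ne _ _ _ h, diagonal_apply_ne _ h]

lemma aux_charpoly_diagonal (d : m → ℝ) :
    (diagonal d).charpoly = ∏ i, ((X : ℝ[X]) - C (d i)) := by
  rw [Matrix.charpoly, aux_charmatrix_diagonal, det_diagonal]

lemma aux_charpoly_conj (U D V : Matrix m m ℝ) (hUV : U * V = 1) :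
    (U * D * V).charpoly = D.charpoly := by
  have hmap : charmatrix (U * D * V)
      = U.map C * charmatrix D * V.map C := by
    have hc : ∀ (P Q : Matrix m m ℝ), (P * Q).map C = P.map C * Q.map C := fun P Q => by
      simpa using Matrix.map_mul (M := P) (N := Q) (f := (C : ℝ →+* ℝ[X]))
    have hscal : U.map C * Matrix.scalar m (X : ℝ[X]) * V.map C
        = Matrix.scalar m (X : ℝ[X]) := by
      rw [(Matrix.scalar_commute (X : ℝ[X]) (Commute.all _) (U.map C)).symm.eq]
      rw [mul_assoc, ← hc, hUV]
      simp
    rw [charmatrix, charmatrix]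
    simp only [RingHom.mapMatrix_apply]
    rw [Matrix.mul_sub, Matrix.sub_mul, hscal, ← hc, ← hc]
  rw [Matrix.charpoly, Matrix.charpoly, hmap, det_mul, det_mul]
  have : (U.map C).det * (V.map C).det = 1 := by
    rw [← det_mul, ← Matrix.map_mul, hUV]
    simp
  calc (U.map C).det * (charmatrix D).det * (V.map C).det
      = (charmatrix D).det * ((U.map C).det * (V.map C).det) := by ring
    _ = (charmatrix D).det := by rw [this, mul_one]

end Aux

open scoped Classical in
theorem stmt_6 (n : ℕ) (g : Matrix (Fin n) (Fin n) ℝ) (hg : g.PosDef)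
    (y : Fin n → ℝ) (hy : y ≠ 0) (t : ℝ) (ht : t = (1/2) * (y ⬝ᵥ g.mulVec y))
    (c₃ d₃ : ℝ) (hc₃ : c₃ ≠ 0) (hcd : c₃ + 2 * t * d₃ ≠ 0)
    (A : Matrix (Fin n) (Fin n) ℝ)
    (hA : A = c₃ • g + d₃ • vecMulVec (g.mulVec y) (g.mulVec y))
    (M : Matrix (Fin n ⊕ Fin n) (Fin n ⊕ Fin n) ℝ)
    (hM : M = fromBlocks 0 A A 0) :
    IsUnit M ∧ M.IsSymm ∧
      ∀ hHerm : M.IsHermitian,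
        (Finset.univ.filter fun i => 0 < hHerm.eigenvalues i).card = n ∧
        (Finset.univ.filter fun i => hHerm.eigenvalues i < 0).card = n := by
  subst ht
  -- symmetry of g
  have hgT : gᵀ = g := by
    have h := hg.isHermitian
    ext i j
    have := congrFun (congrFun h i) j
    simpa [Matrix.conjTranspose_apply] using this
  set w : Fin n → ℝ := g.mulVec y with hw
  -- dot product fact
  have hwy : w ⬝ᵥ y = y ⬝ᵥ g.mulVec y := by
    rw [hw, dotProduct_comm]
  -- A is symmetric
  have hAT : Aᵀ = A := by
    subst hA
    ext i j
    simp only [Matrix.transpose_apply, Matrix.add_apply, Matrix.smul_apply,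
      Matrix.vecMulVec_apply, smul_eq_mul]
    have hg' : g j i = g i j := by
      conv_lhs => rw [← hgT]
      rw [Matrix.transpose_apply]
    rw [hg']
    ring
  -- vecMulVec action
  have hvmv : ∀ v : Fin n → ℝ, (vecMulVec w w).mulVec v = (w ⬝ᵥ v) • w := by
    intro v
    ext i
    simp [Matrix.mulVec, Matrix.vecMulVec_apply, dotProduct, Finset.mul_sum,
      mul_assoc, mul_comm, mul_left_comm]
  -- determinant of A is nonzero
  have hdetA : A.det ≠ 0 := by
    intro h
    obtain ⟨v, hv0, hv⟩ := (Matrix.exists_mulVec_eq_zero_iff (M := A)).mpr h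
    set s : ℝ := w ⬝ᵥ v with hs
    have hmv : A.mulVec v = g.mulVec (c₃ • v + (d₃ * s) • y) := by
      subst hA
      rw [Matrix.add_mulVec, Matrix.smul_mulVec, Matrix.smul_mulVec, hvmv,
        Matrix.mulVec_add, Matrix.mulVec_smul, Matrix.mulVec_smul]
      rw [← hw, ← hs]
      ext i
      simp [smul_smul, mul_comm]
    have hker : c₃ • v + (d₃ * s) • y = 0 := by
      by_contra hne
      have : g.det = 0 := by
        rw [← Matrix.exists_mulVec_eq_zero_iff]
        exact ⟨_, hne, by rw [← hmv, hv]⟩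
      exact (ne_of_gt hg.det_pos) this
    have hveq : v = (-(d₃ * s) / c₃) • y := by
      have : c₃ • v = -((d₃ * s) • y) := by
        rw [eq_neg_iff_add_eq_zero]; exact hker
      have h2 : v = c₃⁻¹ • ((-(d₃ * s)) • y) := by
        rw [← neg_smul] at this
        rw [← this]
        rw [smul_smul, inv_mul_cancel₀ hc₃, one_smul]
      rw [h2, smul_smul]
      ring_nf
    have hs0 : s = 0 := by
      have h3 : s = (-(d₃ * s) / c₃) * (w ⬝ᵥ y) := by
        conv_lhs => rw [hs, hveq]
        simp [dotProduct_smul, smul_eq_mul]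
      rw [hwy] at h3
      have h4 : s * (c₃ + 2 * ((1:ℝ)/2 * (y ⬝ᵥ g.mulVec y)) * d₃) = 0 := by
        field_simp at h3
        nlinarith [h3]
      rcases mul_eq_zero.mp h4 with h | h
      · exact h
      · exact absurd h hcd
    apply hv0
    rw [hveq, hs0]
    simp
  -- M * M block computation ⇒ det M ≠ 0
  have hMM : M * M = fromBlocks (A * A) 0 0 (A * A) := by
    subst hM
    simp [Matrix.fromBlocks_multiply]
  have hdetM : M.det ≠ 0 := by
    have h2 : M.det * M.det = (A.det * A.det) * (A.det * A.det) := by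
      rw [← Matrix.det_mul, hMM, Matrix.det_fromBlocks_zero₂₁, Matrix.det_mul]
    intro h
    rw [h, zero_mul] at h2
    have h3 := mul_self_eq_zero.mp h2.symm
    exact hdetA (mul_self_eq_zero.mp h3)
  have hMsymm : M.IsSymm := by
    subst hM
    rw [Matrix.IsSymm, Matrix.fromBlocks_transpose, Matrix.transpose_zero, hAT]
  refine ⟨(Matrix.isUnit_iff_isUnit_det M).mpr (isUnit_iff_ne_zero.mpr hdetM), hMsymm, ?_⟩
  intro hHerm
  set e : (Fin n ⊕ Fin n) → ℝ := hHerm.eigenvalues with he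
  -- eigenvalues nonzero
  have hdetprod : M.det = ∏ i, e i := by
    simpa using hHerm.det_eq_prod_eigenvalues
  have hne : ∀ i, e i ≠ 0 := by
    intro i hi
    apply hdetM
    rw [hdetprod]
    exact Finset.prod_eq_zero (Finset.mem_univ i) hi
  -- spectral theorem
  set U : Matrix (Fin n ⊕ Fin n) (Fin n ⊕ Fin n) ℝ :=
    ((hHerm.eigenvectorUnitary : Matrix.unitaryGroup (Fin n ⊕ Fin n) ℝ) :
      Matrix (Fin n ⊕ Fin n) (Fin n ⊕ Fin n) ℝ) with hUdef
  have hU1 : U * star U = 1 := (Matrix.mem_unitaryGroup_iff).mp hHerm.eigenvectorUnitary.2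
  have hU2 : star U * U = 1 := (Matrix.mem_unitaryGroup_iff').mp hHerm.eigenvectorUnitary.2
  have hspec : M = U * Matrix.diagonal e * star U := by
    convert hHerm.spectral_theorem using 2
    rw [Unitary.conjStarAlgAut_apply]; rfl
  -- the sign-flip similarity
  set S : Matrix (Fin n ⊕ Fin n) (Fin n ⊕ Fin n) ℝ :=
    fromBlocks (1 : Matrix (Fin n) (Fin n) ℝ) 0 0 (-1) with hSdef
  have hSS : S * S = 1 := by
    rw [hSdef, Matrix.fromBlocks_multiply]
    simp [Matrix.fromBlocks_one]
  have hSMS : S * M * S = -M := by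
    subst hM
    rw [hSdef, Matrix.fromBlocks_multiply, Matrix.fromBlocks_multiply]
    simp [Matrix.fromBlocks_neg]
  -- two charpoly computations for -M
  have hneg1 : (-M).charpoly = ∏ i, ((X : ℝ[X]) - C (e i)) := by
    have hdecomp : -M = (S * U) * Matrix.diagonal e * (star U * S) := by
      rw [← hSMS]
      conv_lhs => rw [hspec]
      noncomm_ring
    have hSUinv : (S * U) * (star U * S) = 1 := by
      calc (S * U) * (star U * S) = S * (U * star U) * S := by noncomm_ring
        _ = 1 := by rw [hU1, mul_one, hSS]
    rw [hdecomp, aux_charpoly_conj _ _ _ hSUinv, aux_charpoly_diagonal]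
  have hneg2 : (-M).charpoly = ∏ i, ((X : ℝ[X]) - C (-(e i))) := by
    have hdecomp : -M = U * Matrix.diagonal (fun i => -(e i)) * star U := by
      conv_lhs => rw [hspec]
      rw [show Matrix.diagonal (fun i => -(e i)) = -Matrix.diagonal e by
        simpa using Matrix.diagonal_neg e]
      noncomm_ring
    rw [hdecomp, aux_charpoly_conj _ _ _ hU1, aux_charpoly_diagonal]
  have key : ∏ i, ((X : ℝ[X]) - C (e i)) = ∏ i, ((X : ℝ[X]) - C (-(e i))) :=
    hneg1.symm.trans hneg2
  -- multiset of eigenvalues is invariant under negation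
  set mlt : Multiset ℝ := Finset.univ.val.map e with hmlt
  have hroots : mlt = mlt.map (fun x => -x) := by
    have h1 : (Multiset.map (fun a => (X : ℝ[X]) - C a) mlt).prod
        = (Multiset.map (fun a => (X : ℝ[X]) - C a) (mlt.map fun x => -x)).prod := by
      rw [hmlt, Multiset.map_map, Multiset.map_map, Multiset.map_map]
      simp only [Function.comp_def]
      exact key
    have h2 := congrArg Polynomial.roots h1
    rwa [Polynomial.roots_multiset_prod_X_sub_C, Polynomial.roots_multiset_prod_X_sub_C] at h2
  -- counting bridges
  have hpos : (Finset.univ.filter fun i => 0 < e i).card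
      = Multiset.countP (fun x => (0:ℝ) < x) mlt := by
    rw [Finset.card_def, Finset.filter_val, hmlt, Multiset.countP_map]
  have hnegc : (Finset.univ.filter fun i => e i < 0).card
      = Multiset.countP (fun x => x < (0:ℝ)) mlt := by
    rw [Finset.card_def, Finset.filter_val, hmlt, Multiset.countP_map]
  have hcc : Multiset.countP (fun x => (0:ℝ) < x) mlt
      = Multiset.countP (fun x => x < (0:ℝ)) mlt := by
    conv_lhs => rw [hroots]
    rw [Multiset.countP_map, Multiset.countP_eq_card_filter]
    exact congrArg Multiset.card (Multiset.filter_congr fun x _ => neg_pos)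
  have hPQ : (Finset.univ.filter fun i => 0 < e i).card
      = (Finset.univ.filter fun i => e i < 0).card := by
    rw [hpos, hnegc, hcc]
  have hsum : (Finset.univ.filter fun i => 0 < e i).card
      + (Finset.univ.filter fun i => e i < 0).card = n + n := by
    have hnegfilter : (Finset.univ.filter fun i => ¬ (0 < e i))
        = (Finset.univ.filter fun i => e i < 0) := by
      apply Finset.filter_congr
      intro i _
      constructor
      · intro h; exact lt_of_le_of_ne (not_lt.mp h) (hne i)
      · intro h; exact not_lt.mpr (le_of_lt h)
    have hfc := Finset.card_filter_add_card_filter_not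
      (s := (Finset.univ : Finset (Fin n ⊕ Fin n))) (p := fun i => 0 < e i)
    beta_reduce at hfc
    rw [hnegfilter] at hfc
    rw [hfc]
    simp [Fintype.card_sum]
  constructor
  · omega
  · omega
end
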